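/- arXiv:2308.12000 — 3 statements merged into one kernel-verified Lean document; each statement's English description precedes it below -/
import Mathlib

section
/- Let φ(ξ) = log(1+e^ξ), φ'(ξ) = e^ξ/(1+e^ξ), and d̄(α,β) = φ(α) - φ(β) - (α-β)φ'(β). Fix α < 0 and x ∈ (1/2, 1], set ξ₁ = -α/(2x-1), ξ₂ = α/(2x-1), x̃ = (1/2 + x)/2, and ξ̃ = (1-x̃)ξ₁ + x̃ξ₂. Then d̄(ξ₁, ξ̃) > d̄(ξ₂, ξ̃). -/
theorem stmt_8 (α x : ℝ) (hα : α < 0) (hx : x ∈ Set.Ioc (1/2 : ℝ) 1) :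
    let φ : ℝ → ℝ := fun t => Real.log (1 + Real.exp t)
    let φ' : ℝ → ℝ := fun t => Real.exp t / (1 + Real.exp t)
    let d : ℝ → ℝ → ℝ := fun a b => φ a - φ b - (a - b) * φ' b
    let ξ₁ : ℝ := -α / (2 * x - 1)
    let ξ₂ : ℝ := α / (2 * x - 1)
    let x' : ℝ := (1/2 + x) / 2
    let ξ' : ℝ := (1 - x') * ξ₁ + x' * ξ₂
    d ξ₁ ξ' > d ξ₂ ξ' := by
  intro φ φ' d ξ₁ ξ₂ x' ξ'
  obtain ⟨hx1, hx2⟩ := hx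
  have hden : (0:ℝ) < 2 * x - 1 := by linarith
  have ht : 0 < ξ₁ := div_pos (by linarith) hden
  have hξ₂ : ξ₂ = -ξ₁ := by simp [ξ₁, ξ₂, neg_div]
  have hξ'neg : ξ' < 0 := by
    have hx' : (1:ℝ)/2 < x' := by simp only [x']; linarith
    have : ξ' = (1 - 2 * x') * ξ₁ := by rw [show ξ' = (1 - x') * ξ₁ + x' * ξ₂ from rfl, hξ₂]; ring
    rw [this]
    exact mul_neg_of_neg_of_pos (by linarith) ht
  -- key facts
  have hpos : ∀ t : ℝ, (0:ℝ) < 1 + Real.exp t := fun t => by positivity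
  have hφdiff : φ ξ₁ - φ ξ₂ = ξ₁ := by
    rw [hξ₂]
    have h1 : (1 : ℝ) + Real.exp ξ₁ = Real.exp ξ₁ * (1 + Real.exp (-ξ₁)) := by
      rw [mul_add, mul_one, ← Real.exp_add]; simp; ring
    show Real.log (1 + Real.exp ξ₁) - Real.log (1 + Real.exp (-ξ₁)) = ξ₁
    rw [h1, Real.log_mul (Real.exp_ne_zero _) (ne_of_gt (hpos _)), Real.log_exp]
    ring
  have hφ'lt : φ' ξ' < 1/2 := by
    have he : Real.exp ξ' < 1 := Real.exp_lt_one_iff.mpr hξ'neg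
    rw [div_lt_iff₀ (hpos ξ')]
    show Real.exp ξ' < 1/2 * (1 + Real.exp ξ')
    linarith
  show d ξ₁ ξ' > d ξ₂ ξ'
  have : d ξ₁ ξ' - d ξ₂ ξ' = (φ ξ₁ - φ ξ₂) - (ξ₁ - ξ₂) * φ' ξ' := by
    show (φ ξ₁ - φ ξ' - (ξ₁ - ξ') * φ' ξ') - (φ ξ₂ - φ ξ' - (ξ₂ - ξ') * φ' ξ') = _
    ring
  have hkey : (0:ℝ) < d ξ₁ ξ' - d ξ₂ ξ' := by
    rw [this, hφdiff, hξ₂]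
    have : ξ₁ - -ξ₁ = 2 * ξ₁ := by ring
    rw [this]
    nlinarith [hφ'lt, ht]
  linarith
end

section
/- For μ₁, μ₂ ∈ (0,1) with μ₁ > μ₂ and μ₁ + μ₂ ≥ 1, let ĝ(x) = (1-μ₁)^{1-x}(1-μ₂)^x + μ₁^{1-x}μ₂^x for x ∈ [0,1]. Suppose x* ∈ (0,1) satisfies ĝ'(x*) = 0. Then for all δ ∈ (0, min(x*, 1-x*)], ĝ(x*+δ) ≥ ĝ(x*-δ). -/
open Real

lemma sinh_le_mul_cosh' : ∀ x : ℝ, 0 ≤ x → Real.sinh x ≤ x * Real.cosh x := by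
  intro x hx
  have hmono : MonotoneOn (fun y : ℝ => y * Real.cosh y - Real.sinh y) (Set.Ici 0) := by
    apply monotoneOn_of_deriv_nonneg (convex_Ici 0)
    · exact (Continuous.sub (continuous_id.mul Real.continuous_cosh)
        Real.continuous_sinh).continuousOn
    · intro y hy
      exact (((hasDerivAt_id y).mul (Real.hasDerivAt_cosh y)).sub
        (Real.hasDerivAt_sinh y)).differentiableAt.differentiableWithinAt
    · intro y hy
      rw [interior_Ici] at hy
      have hd : HasDerivAt (fun y : ℝ => y * Real.cosh y - Real.sinh y)
          (1 * Real.cosh y + y * Real.sinh y - Real.cosh y) y :=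
        ((hasDerivAt_id y).mul (Real.hasDerivAt_cosh y)).sub (Real.hasDerivAt_sinh y)
      rw [hd.deriv]
      have h1 : 0 ≤ Real.sinh y := Real.sinh_nonneg_iff.mpr (le_of_lt hy)
      have h2 : 0 ≤ y * Real.sinh y := mul_nonneg (le_of_lt hy) h1
      linarith
  have h := hmono (Set.self_mem_Ici) (Set.mem_Ici.mpr hx) hx
  simp only [Real.sinh_zero, Real.cosh_zero, mul_one, zero_mul, sub_zero, mul_zero] at h
  linarith
  
lemma mul_sinh_le' (v u : ℝ) (hv : 0 ≤ v) (hvu : v ≤ u) :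
    u * Real.sinh v ≤ v * Real.sinh u := by
  have hmono : MonotoneOn (fun y : ℝ => v * Real.sinh y - y * Real.sinh v) (Set.Ici v) := by
    apply monotoneOn_of_deriv_nonneg (convex_Ici v)
    · exact (Continuous.sub (continuous_const.mul Real.continuous_sinh)
        (continuous_id.mul continuous_const)).continuousOn
    · intro y hy
      exact (((hasDerivAt_const y v).mul (Real.hasDerivAt_sinh y)).sub
        ((hasDerivAt_id y).mul (hasDerivAt_const y (Real.sinh v)))).differentiableAt.differentiableWithinAt
    · intro y hy
      rw [interior_Ici] at hy
      have hd : HasDerivAt (fun y : ℝ => v * Real.sinh y - y * Real.sinh v)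
          (0 * Real.sinh y + v * Real.cosh y - (1 * Real.sinh v + y * 0)) y :=
        ((hasDerivAt_const y v).mul (Real.hasDerivAt_sinh y)).sub
          ((hasDerivAt_id y).mul (hasDerivAt_const y (Real.sinh v)))
      rw [hd.deriv]
      have h1 : Real.sinh v ≤ v * Real.cosh v := sinh_le_mul_cosh' v hv
      have h2 : Real.cosh v ≤ Real.cosh y := by
        rw [Real.cosh_le_cosh, abs_of_nonneg hv, abs_of_nonneg (hv.trans hy.le)]
        exact hy.le
      nlinarith
  have h := hmono (Set.self_mem_Ici) (Set.mem_Ici.mpr hvu) hvu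
  simp only at h
  linarith

theorem stmt_12 (μ₁ μ₂ : ℝ) (h₁ : μ₁ ∈ Set.Ioo (0:ℝ) 1) (h₂ : μ₂ ∈ Set.Ioo (0:ℝ) 1)
    (hgt : μ₁ > μ₂) (hsum : μ₁ + μ₂ ≥ 1)
    (g : ℝ → ℝ)
    (hg : g = fun x => (1 - μ₁) ^ (1 - x) * (1 - μ₂) ^ x + μ₁ ^ (1 - x) * μ₂ ^ x)
    (xs : ℝ) (hxs : xs ∈ Set.Ioo (0:ℝ) 1) (hcrit : deriv g xs = 0) :
    ∀ δ : ℝ, δ ∈ Set.Ioc (0:ℝ) (min xs (1 - xs)) → g (xs + δ) ≥ g (xs - δ) := by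
  obtain ⟨hμ₁0, hμ₁1⟩ := h₁
  obtain ⟨hμ₂0, hμ₂1⟩ := h₂
  have hp : (0:ℝ) < 1 - μ₁ := by linarith
  have hq : (0:ℝ) < 1 - μ₂ := by linarith
  set α : ℝ := Real.log (1 - μ₂) - Real.log (1 - μ₁) with hα
  set β : ℝ := Real.log μ₂ - Real.log μ₁ with hβ
  set c₁ : ℝ := Real.log (1 - μ₁) with hc₁
  set c₂ : ℝ := Real.log μ₁ with hc₂
  have hgexp : g = fun x => Real.exp (c₁ + x * α) + Real.exp (c₂ + x * β) := by
    rw [hg]; funext x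
    rw [Real.rpow_def_of_pos hp, Real.rpow_def_of_pos hq,
      Real.rpow_def_of_pos hμ₁0, Real.rpow_def_of_pos hμ₂0,
      ← Real.exp_add, ← Real.exp_add]
    ring_nf
    rw [hα, hβ, hc₁, hc₂]; congr 1 <;> congr 1 <;> ring
  have hα0 : 0 < α := by
    have := Real.log_lt_log hp (by linarith : 1 - μ₁ < 1 - μ₂)
    simp only [hα]; linarith
  have hβ0 : β < 0 := by
    have := Real.log_lt_log hμ₂0 hgt
    simp only [hβ]; linarith
  have hαβ : -β ≤ α := by
    have hineq : (1 - μ₁) * μ₁ ≤ (1 - μ₂) * μ₂ := by nlinarith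
    have h1 : Real.log ((1 - μ₁) * μ₁) ≤ Real.log ((1 - μ₂) * μ₂) :=
      Real.log_le_log (by positivity) hineq
    rw [Real.log_mul (ne_of_gt hp) (ne_of_gt hμ₁0),
      Real.log_mul (ne_of_gt hq) (ne_of_gt hμ₂0)] at h1
    simp only [hα, hβ]; linarith
  have hd : HasDerivAt g (Real.exp (c₁ + xs * α) * α + Real.exp (c₂ + xs * β) * β) xs := by
    rw [hgexp]
    have h1 : HasDerivAt (fun x : ℝ => c₁ + x * α) α xs := by
      simpa using ((hasDerivAt_id xs).mul_const α).const_add c₁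
    have h2 : HasDerivAt (fun x : ℝ => c₂ + x * β) β xs := by
      simpa using ((hasDerivAt_id xs).mul_const β).const_add c₂
    exact (h1.exp).add (h2.exp)
  rw [hd.deriv] at hcrit
  set E₁ : ℝ := Real.exp (c₁ + xs * α) with hE₁
  set E₂ : ℝ := Real.exp (c₂ + xs * β) with hE₂
  have hE₁pos : 0 < E₁ := Real.exp_pos _
  have hE₂pos : 0 < E₂ := Real.exp_pos _
  intro δ hδ
  obtain ⟨hδ0, _⟩ := hδ
  have hkey : α * Real.sinh (-β * δ) ≤ -β * Real.sinh (α * δ) := by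
    have h := mul_sinh_le' (-β * δ) (α * δ)
      (mul_nonneg (by linarith) hδ0.le) (by nlinarith)
    have h' : δ * (α * Real.sinh (-β * δ)) ≤ δ * (-β * Real.sinh (α * δ)) := by
      nlinarith [h]
    exact le_of_mul_le_mul_left h' hδ0
  rw [hgexp]
  simp only [ge_iff_le]
  have f1 : Real.exp (c₁ + (xs + δ) * α) = E₁ * Real.exp (δ * α) := by
    rw [hE₁, ← Real.exp_add]; congr 1; ring
  have f2 : Real.exp (c₂ + (xs + δ) * β) = E₂ * Real.exp (δ * β) := by
    rw [hE₂, ← Real.exp_add]; congr 1; ring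
  have f3 : Real.exp (c₁ + (xs - δ) * α) = E₁ * Real.exp (-(δ * α)) := by
    rw [hE₁, ← Real.exp_add]; congr 1; ring
  have f4 : Real.exp (c₂ + (xs - δ) * β) = E₂ * Real.exp (-(δ * β)) := by
    rw [hE₂, ← Real.exp_add]; congr 1; ring
  rw [f1, f2, f3, f4]
  have hdiff : E₁ * Real.exp (δ * α) + E₂ * Real.exp (δ * β)
      - (E₁ * Real.exp (-(δ * α)) + E₂ * Real.exp (-(δ * β)))
      = 2 * E₁ * Real.sinh (δ * α) + 2 * E₂ * Real.sinh (δ * β) := by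
    rw [Real.sinh_eq, Real.sinh_eq]; ring
  have hEcrit : α * E₁ = -β * E₂ := by linarith [hcrit]
  have hfin : 0 ≤ 2 * E₁ * Real.sinh (δ * α) + 2 * E₂ * Real.sinh (δ * β) := by
    have hs : Real.sinh (δ * β) = -Real.sinh (-β * δ) := by
      rw [← Real.sinh_neg]; congr 1; ring
    rw [hs]
    have hmul : 0 ≤ α * (2 * E₁ * Real.sinh (δ * α) + 2 * E₂ * -Real.sinh (-β * δ)) := by
      have hrw : α * (2 * E₁ * Real.sinh (δ * α) + 2 * E₂ * -Real.sinh (-β * δ))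
          = 2 * E₂ * (-β * Real.sinh (α * δ) - α * Real.sinh (-β * δ))
            + 2 * Real.sinh (δ * α) * (α * E₁ - -β * E₂)
            + 2 * E₂ * (-β) * (Real.sinh (δ * α) - Real.sinh (α * δ)) := by ring
      rw [hrw, hEcrit, mul_comm δ α]
      have h1 := sub_nonneg.mpr hkey
      have : (0:ℝ) ≤ 2 * E₂ * (-β * Real.sinh (α * δ) - α * Real.sinh (-β * δ)) :=
        mul_nonneg (by linarith) h1
      simp only [sub_self, mul_zero, zero_mul, add_zero]
      linarith
    nlinarith [hmul, hα0]
  linarith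
end

section
/- Let φ(ξ) = log(1+e^ξ) with derivative φ', and for ξ₁ ≠ ξ₂ define η(ξ₁,ξ₂) = (φ')⁻¹((φ(ξ₁)-φ(ξ₂))/(ξ₁-ξ₂)) and the Bregman divergence d̄(α,β) = φ(α)-φ(β)-(α-β)φ'(β). For ξ₁ > ξ₂ and x̃ ∈ (0,1), set ξ̃ = (1-x̃)ξ₁ + x̃ξ₂. Then η(ξ₁,ξ₂) > ξ̃ if and only if d̄(ξ₁, ξ̃) > d̄(ξ₂, ξ̃). -/
lemma stmt16_hasd (t : ℝ) :
    HasDerivAt (fun t => Real.log (1 + Real.exp t)) (Real.exp t / (1 + Real.exp t)) t := by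
  have h := ((Real.hasDerivAt_exp t).const_add 1).log (by positivity)
  simpa using h

lemma stmt16_deriv : deriv (fun t => Real.log (1 + Real.exp t)) =
    fun t => Real.exp t / (1 + Real.exp t) := by
  funext t; exact (stmt16_hasd t).deriv

lemma stmt16_mono : StrictMono (fun t => Real.exp t / (1 + Real.exp t)) := by
  intro a b hab
  have ha : (0:ℝ) < 1 + Real.exp a := by positivity
  have hb : (0:ℝ) < 1 + Real.exp b := by positivity
  have he : Real.exp a < Real.exp b := Real.exp_lt_exp.2 hab
  simp only []
  rw [div_lt_div_iff₀ ha hb]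
  nlinarith

theorem stmt_16 (ξ₁ ξ₂ x' : ℝ) (h : ξ₂ < ξ₁) (hx : x' ∈ Set.Ioo (0:ℝ) 1) :
    let φ : ℝ → ℝ := fun t => Real.log (1 + Real.exp t)
    let d : ℝ → ℝ → ℝ := fun a b => φ a - φ b - (a - b) * deriv φ b
    let η : ℝ := Function.invFun (deriv φ) ((φ ξ₁ - φ ξ₂) / (ξ₁ - ξ₂))
    let ξ' : ℝ := (1 - x') * ξ₁ + x' * ξ₂
    (η > ξ' ↔ d ξ₁ ξ' > d ξ₂ ξ') := by
  intro φ d η ξ'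
  set g : ℝ → ℝ := fun t => Real.exp t / (1 + Real.exp t) with hg
  have hderiv : deriv φ = g := stmt16_deriv
  -- MVT: exists c with g c = slope
  obtain ⟨c, _, hc⟩ := exists_hasDerivAt_eq_slope φ g h
    (fun t _ => (stmt16_hasd t).continuousAt.continuousWithinAt)
    (fun t _ => stmt16_hasd t)
  have hslope : (φ ξ₁ - φ ξ₂) / (ξ₁ - ξ₂) = g c := by
    exact hc.symm
  have hinj : Function.Injective (deriv φ) := by
    rw [hderiv]; exact stmt16_mono.injective
  have hη : η = c := by
    show Function.invFun (deriv φ) ((φ ξ₁ - φ ξ₂) / (ξ₁ - ξ₂)) = c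
    rw [hslope, ← hderiv]
    exact Function.leftInverse_invFun hinj c
  have hdiff : d ξ₁ ξ' - d ξ₂ ξ' = (ξ₁ - ξ₂) * (g c - g ξ') := by
    show (φ ξ₁ - φ ξ' - (ξ₁ - ξ') * deriv φ ξ') - (φ ξ₂ - φ ξ' - (ξ₂ - ξ') * deriv φ ξ')
        = (ξ₁ - ξ₂) * (g c - g ξ')
    rw [hderiv]
    have h12 : ξ₁ - ξ₂ ≠ 0 := by linarith
    have : φ ξ₁ - φ ξ₂ = (ξ₁ - ξ₂) * g c := by
      field_simp at hslope; linarith [hslope]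
    nlinarith [this]
  constructor
  · intro hgt
    have : g ξ' < g c := stmt16_mono (hη ▸ hgt)
    have : 0 < (ξ₁ - ξ₂) * (g c - g ξ') := by nlinarith
    linarith [hdiff ▸ this]
  · intro hgt
    have hpos : 0 < (ξ₁ - ξ₂) * (g c - g ξ') := by rw [← hdiff]; linarith
    have : g ξ' < g c := by nlinarith
    have := stmt16_mono.lt_iff_lt.1 this
    rw [hη]; exact this
end
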